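/- If Y_1, …, Y_N are i.i.d. under P, then under the SRSWOR design the sample variables Y_{i(1)}, …, Y_{i(n)}, defined by Y_{i(k)}(s, ω) = Y_{s(k)}(ω), are mutually stochastically independent under the joint measure P_{d,m}, and each Y_{i(k)} has the common law of Y_1. -/

import Mathlib

open MeasureTheory Filter Topology ProbabilityTheory

/-- For injective `s`, intersections over reindexed variables factor. -/
lemma aux_inj {Ω : Type*} [MeasurableSpace Ω] (P : Measure Ω) {n N : ℕ}
    (Y : Fin N → Ω → ℝ)
    (hYindep : iIndepFun Y P)
    (s : Fin n → Fin N) (hs : Function.Injective s) (S : Finset (Fin n))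
    (sets : Fin n → Set ℝ) (hsets : ∀ k ∈ S, MeasurableSet (sets k)) :
    P (⋂ k ∈ S, Y (s k) ⁻¹' sets k) = ∏ k ∈ S, P (Y (s k) ⁻¹' sets k) := by
  classical
  set g : Fin N → Set ℝ := fun j => ⋂ k ∈ S.filter (fun k => s k = j), sets k with hg
  have hfilter : ∀ k ∈ S, S.filter (fun k' => s k' = s k) = {k} := by
    intro k hk
    ext k'
    simp only [Finset.mem_filter, Finset.mem_singleton]
    constructor
    · rintro ⟨_, h⟩; exact hs h
    · rintro rfl; exact ⟨hk, rfl⟩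
  have hgk : ∀ k ∈ S, g (s k) = sets k := by
    intro k hk
    simp only [hg]
    rw [hfilter k hk]
    simp
  have hgmeas : ∀ j ∈ S.image s, MeasurableSet (g j) := by
    intro j _
    exact MeasurableSet.biInter (S.filter _).countable_toSet
      (fun k hk => hsets k (Finset.mem_of_mem_filter k hk))
  have hinter : (⋂ k ∈ S, Y (s k) ⁻¹' sets k) = ⋂ j ∈ S.image s, Y j ⁻¹' g j := by
    ext x
    simp only [Set.mem_iInter, Finset.mem_image]
    constructor
    · rintro h j ⟨k, hk, rfl⟩
      rw [hgk k hk]; exact h k hk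
    · intro h k hk
      rw [← hgk k hk]; exact h (s k) ⟨k, hk, rfl⟩
  have hprod : ∏ k ∈ S, P (Y (s k) ⁻¹' sets k) = ∏ j ∈ S.image s, P (Y j ⁻¹' g j) := by
    rw [Finset.prod_image (fun a _ b _ h => hs h)]
    exact Finset.prod_congr rfl fun k hk => by rw [hgk k hk]
  rw [hinter, hprod]
  exact hYindep.measure_inter_preimage_eq_mul (S.image s) hgmeas

/-- Key computation: the joint measure of the intersection of preimages. -/
lemma aux_key {Ω : Type*} [MeasurableSpace Ω] (P : Measure Ω) [IsProbabilityMeasure P]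
    {n N : ℕ} (hN : 0 < N)
    (Y : Fin N → Ω → ℝ) (hYmeas : ∀ i, Measurable (Y i))
    (hYindep : iIndepFun Y P)
    (hYident : ∀ i, P.map (Y i) = P.map (Y ⟨0, hN⟩))
    (Q : Measure (Fin n → Fin N)) [IsProbabilityMeasure Q]
    (hQ0 : ∀ s, ¬ Function.Injective s → Q {s} = 0)
    (S : Finset (Fin n)) (sets : Fin n → Set ℝ)
    (hsets : ∀ k ∈ S, MeasurableSet (sets k)) :
    (Q.prod P) (⋂ k ∈ S, (fun x : (Fin n → Fin N) × Ω => Y (x.1 k) x.2) ⁻¹' sets k)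
      = ∏ k ∈ S, (P.map (Y ⟨0, hN⟩)) (sets k) := by
  classical
  have hZ : ∀ k : Fin n, Measurable (fun x : (Fin n → Fin N) × Ω => Y (x.1 k) x.2) := by
    intro k
    have h1 : Measurable (fun p : Ω × (Fin n → Fin N) => Y (p.2 k) p.1) :=
      measurable_from_prod_countable_left (fun s => hYmeas (s k))
    exact h1.comp measurable_swap
  have hA : MeasurableSet
      (⋂ k ∈ S, (fun x : (Fin n → Fin N) × Ω => Y (x.1 k) x.2) ⁻¹' sets k) :=
    MeasurableSet.biInter S.countable_toSet (fun k hk => (hZ k) (hsets k hk))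
  rw [Measure.prod_apply hA, lintegral_fintype]
  have hsec : ∀ s : Fin n → Fin N,
      (Prod.mk s ⁻¹' ⋂ k ∈ S, (fun x : (Fin n → Fin N) × Ω => Y (x.1 k) x.2) ⁻¹' sets k)
        = ⋂ k ∈ S, Y (s k) ⁻¹' sets k := by
    intro s; ext ω; simp
  have hterm : ∀ s : Fin n → Fin N,
      P (Prod.mk s ⁻¹' ⋂ k ∈ S, (fun x : (Fin n → Fin N) × Ω => Y (x.1 k) x.2) ⁻¹' sets k)
        * Q {s} = (∏ k ∈ S, (P.map (Y ⟨0, hN⟩)) (sets k)) * Q {s} := by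
    intro s
    by_cases hs : Function.Injective s
    · rw [hsec s, aux_inj P Y hYindep s hs S sets hsets]
      congr 1
      refine Finset.prod_congr rfl fun k hk => ?_
      rw [← Measure.map_apply (hYmeas (s k)) (hsets k hk), hYident (s k)]
    · rw [hQ0 s hs, mul_zero, mul_zero]
  rw [Finset.sum_congr rfl fun s _ => hterm s, ← Finset.mul_sum]
  have hQuniv : ∑ s : Fin n → Fin N, Q {s} = 1 := by
    have hd : (↑(Finset.univ : Finset (Fin n → Fin N)) : Set (Fin n → Fin N)).PairwiseDisjoint
        (fun s => ({s} : Set (Fin n → Fin N))) := fun a _ b _ hab => by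
      simp [Function.onFun, Set.disjoint_singleton, hab]
    have := measure_biUnion_finset (μ := Q) hd
      (fun s _ => measurableSet_singleton s)
    simp only [Finset.mem_univ, Set.iUnion_true] at this
    rw [← this]
    simp [Set.iUnion_of_singleton]
  rw [hQuniv, mul_one]

theorem statement13
    {Ω : Type*} [MeasurableSpace Ω] (P : Measure Ω) [IsProbabilityMeasure P]
    (n N : ℕ) (hn : 1 ≤ n) (hnN : n ≤ N)
    (Y : Fin N → Ω → ℝ) (hYmeas : ∀ i, Measurable (Y i))
    (hYindep : iIndepFun Y P)
    (hYident : ∀ i, P.map (Y i) = P.map (Y ⟨0, by omega⟩))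
    (Q : Measure (Fin n → Fin N)) [IsProbabilityMeasure Q]
    (hQ : ∀ s, Function.Injective s →
      Q {s} = ENNReal.ofReal ((Nat.factorial (N - n) : ℝ) / (Nat.factorial N : ℝ)))
    (hQ0 : ∀ s, ¬ Function.Injective s → Q {s} = 0) :
    iIndepFun
      (fun (k : Fin n) (x : (Fin n → Fin N) × Ω) => Y (x.1 k) x.2) (Q.prod P) ∧
    ∀ k : Fin n,
      (Q.prod P).map (fun x : (Fin n → Fin N) × Ω => Y (x.1 k) x.2)
        = P.map (Y ⟨0, by omega⟩) := by
  have hN : 0 < N := by omega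
  have hZ : ∀ k : Fin n, Measurable (fun x : (Fin n → Fin N) × Ω => Y (x.1 k) x.2) := by
    intro k
    have h1 : Measurable (fun p : Ω × (Fin n → Fin N) => Y (p.2 k) p.1) :=
      measurable_from_prod_countable_left (fun s => hYmeas (s k))
    exact h1.comp measurable_swap
  have hsingle : ∀ (k : Fin n) (t : Set ℝ), MeasurableSet t →
      (Q.prod P) ((fun x : (Fin n → Fin N) × Ω => Y (x.1 k) x.2) ⁻¹' t)
        = (P.map (Y ⟨0, hN⟩)) t := by
    intro k t ht
    have := aux_key P hN Y hYmeas hYindep (fun i => hYident i) Q hQ0 {k}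
      (fun _ => t) (fun _ _ => ht)
    simpa using this
  constructor
  · rw [iIndepFun_iff_measure_inter_preimage_eq_mul]
    intro S sets hsets
    rw [aux_key P hN Y hYmeas hYindep (fun i => hYident i) Q hQ0 S sets hsets]
    exact Finset.prod_congr rfl fun k hk => (hsingle k (sets k) (hsets k hk)).symm
  · intro k
    ext t ht
    rw [Measure.map_apply (hZ k) ht, hsingle k t ht]
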